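/- Let κ be supercompact with the Magidor characterization, and suppose M ≺ V_μ is a κ-Magidor model with collapse V_{γ̄} and π(κ) = κ̄ where cof(γ̄) ≥ κ̄. Then M is closed under sequences of length < κ̄ taken from M, i.e., every subset of M of size < κ̄ that is an element of V_μ and a subset of M of size less than sup(M ∩ κ) belongs to M. -/

import Mathlib

noncomputable section
namespace GM

open ZFSet

attribute [local instance] Classical.propDecidable

/-- Classically, every map is definable; we use this to form images. -/
noncomputable def img (f : ZFSet → ZFSet) (s : ZFSet) : ZFSet :=
  @ZFSet.image f (Classical.allZFSetDefinable _) s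

noncomputable def Vzf (o : Ordinal.{0}) : ZFSet.{0} :=
  ZFSet.sUnion (ZFSet.range fun i : o.ToType =>
    (Vzf (@Ordinal.typein o.ToType (· < ·) isWellOrder_lt i)).powerset)
termination_by o
decreasing_by exact Ordinal.typein_lt_self i

inductive Fml : Type
  | mem : Nat → Nat → Fml
  | eq : Nat → Nat → Fml
  | imp : Fml → Fml → Fml
  | neg : Fml → Fml
  | all : Fml → Fml

def Sat (A : ZFSet) : Fml → (Nat → ZFSet) → Prop
  | .mem i j, v => v i ∈ v j
  | .eq i j, v => v i = v j
  | .imp φ ψ, v => Sat A φ v → Sat A ψ v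
  | .neg φ, v => ¬ Sat A φ v
  | .all φ, v => ∀ x ∈ A, Sat A φ (fun n => match n with | 0 => x | n + 1 => v n)

def ElemSub (M A : ZFSet) : Prop :=
  M ⊆ A ∧ ∀ (φ : Fml) (v : Nat → ZFSet), (∀ n, v n ∈ M) → (Sat M φ v ↔ Sat A φ v)

def ElemEmbed (A B : ZFSet) (j : ZFSet → ZFSet) : Prop :=
  (∀ x ∈ A, j x ∈ B) ∧
    ∀ (φ : Fml) (v : Nat → ZFSet), (∀ n, v n ∈ A) → (Sat A φ v ↔ Sat B φ (fun n => j (v n)))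

def IsOrd (x : ZFSet) : Prop := x.IsTransitive ∧ ∀ y ∈ x, ZFSet.IsTransitive y

def IsZFn (f : ZFSet) : Prop :=
  (∀ p ∈ f, ∃ x y, p = ZFSet.pair x y) ∧
    ∀ x y y', ZFSet.pair x y ∈ f → ZFSet.pair x y' ∈ f → y = y'

def IsTupleOf (X x : ZFSet) : Prop :=
  ∃ n ∈ ZFSet.omega,
    (∀ p ∈ x, ∃ i ∈ n, ∃ v ∈ X, p = ZFSet.pair i v) ∧ ∀ i ∈ n, ∃! v, ZFSet.pair i v ∈ x

def HullZ (M X : ZFSet) : ZFSet :=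
  (ZFSet.sUnion (ZFSet.sUnion (ZFSet.sUnion M))).sep fun y =>
    ∃ f ∈ M, IsZFn f ∧ ∃ x, IsTupleOf X x ∧ ZFSet.pair x y ∈ f

def zcard (x : ZFSet) : Cardinal.{1} := Cardinal.mk x.toSet

def ordSup (M : ZFSet) : Ordinal :=
  sSup {o : Ordinal | ∃ x, x ∈ M ∧ IsOrd x ∧ x.rank = o}

/-- The (relative) Mostowski collapse map of the class of elements of `N`. -/
noncomputable def clps (N : ZFSet) (x : ZFSet) : ZFSet :=
  img (fun y => if h : y.rank < x.rank then clps N y else ∅) (x.sep fun y => y ∈ N)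
termination_by x.rank
decreasing_by all_goals assumption

/-- Evaluation of a name by a filter `G`. -/
noncomputable def val (G : Set ZFSet) (x : ZFSet) : ZFSet :=
  img (fun y => if h : y.rank < x.rank then val G y else ∅)
    ((ZFSet.sUnion (ZFSet.sUnion x)).sep fun y => ∃ p, p ∈ G ∧ ZFSet.pair y p ∈ x)
termination_by x.rank
decreasing_by all_goals assumption

/-- The projection `M ↾ α`: the image of `M` under the transitive collapse of `Hull(M, V_α)`. -/
noncomputable def proj (α : Ordinal) (M : ZFSet) : ZFSet :=
  img (clps (HullZ M (Vzf α))) M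

/-- `E = {α < λ : V_α ≺ V_λ}`. -/
def Eset (lam : Ordinal) : Set Ordinal := {a | a < lam ∧ ElemSub (Vzf a) (Vzf lam)}

def IsAmod (α : Ordinal) (A : ZFSet) : Prop :=
  A.IsTransitive ∧ ElemSub (Vzf α) A ∧ zcard A = zcard (Vzf α)

/-- `M` is an α-model (a virtual model at level `α`). -/
def IsVM (κ lam α : Ordinal) (M : ZFSet) : Prop :=
  α ∈ Eset lam ∧ zcard M < Cardinal.lift.{1,0} κ.card ∧
    IsAmod α (HullZ M (Vzf α)) ∧ ElemSub M (HullZ M (Vzf α))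

def IsVirtual (κ lam : Ordinal) (M : ZFSet) : Prop := ∃ α, IsVM κ lam α M

/-- `η(M)`, the level of a virtual model. -/
def levelOf (κ lam : Ordinal) (M : ZFSet) : Ordinal := sSup {a | IsVM κ lam a M}

def IsIsoOn (D₁ D₂ : ZFSet) (σ : ZFSet → ZFSet) : Prop :=
  (∀ x ∈ D₁, σ x ∈ D₂) ∧ (∀ y ∈ D₂, ∃ x ∈ D₁, σ x = y) ∧
    (∀ x ∈ D₁, ∀ y ∈ D₁, σ x = σ y → x = y) ∧
    ∀ x ∈ D₁, ∀ y ∈ D₁, (x ∈ y ↔ σ x ∈ σ y)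

/-- `M ≅_α N` : an isomorphism of `M` onto `N` extending to `Hull(M,V_α) → Hull(N,V_α)`. -/
def IsoAt (α : Ordinal) (M N : ZFSet) : Prop :=
  ∃ σ : ZFSet → ZFSet,
    IsIsoOn (HullZ M (Vzf α)) (HullZ N (Vzf α)) σ ∧ img σ M = N

/-- `M ∈_α N`. -/
def memAt (α : Ordinal) (M N : ZFSet) : Prop := ∃ M', M' ∈ N ∧ IsoAt α M M'

/-- `κ_M = sup (M ∩ κ)`. -/
def kappaOf (κ : Ordinal) (M : ZFSet) : Ordinal :=
  sSup {o : Ordinal | ∃ x, x ∈ M ∧ IsOrd x ∧ x.rank = o ∧ o < κ}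

def activeAt (κ lam α : Ordinal) (M : ZFSet) : Prop :=
  α ∈ Eset lam ∧ α ≤ levelOf κ lam M ∧
    ∀ β < α, ∃ x, x ∈ HullZ M (Vzf (kappaOf κ M)) ∧ IsOrd x ∧
      x.rank ∈ Eset lam ∧ β ≤ x.rank ∧ x.rank < α

def stronglyActiveAt (κ lam α : Ordinal) (M : ZFSet) : Prop :=
  α ∈ Eset lam ∧ α ≤ levelOf κ lam M ∧
    ∀ β < α, ∃ x, x ∈ M ∧ IsOrd x ∧ x.rank ∈ Eset lam ∧ β ≤ x.rank ∧ x.rank < α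

def aSet (κ lam : Ordinal) (M : ZFSet) : Set Ordinal := {a | activeAt κ lam a M}

def alphaMax (κ lam : Ordinal) (M N : ZFSet) : Ordinal :=
  sSup (aSet κ lam M ∩ aSet κ lam N)

/-- Magidor model (with respect to `κ`). -/
def IsMagidor (κ : Ordinal) (M : ZFSet) : Prop :=
  ∃ γ' : Ordinal, γ' < κ ∧ img (clps M) M = Vzf γ' ∧
    ∃ k, k ∈ M ∧ IsOrd k ∧ k.rank = κ ∧
      ((clps M k).rank).card ≤ Ordinal.cof γ' ∧ Vzf ((clps M k).rank) ⊆ M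

def CountableZ (M : ZFSet) : Prop := M.toSet.Countable

/-- The meet `N ∧ M` of a Magidor model `N` and a countable model `M` is defined
when `N ∈_α M` for `α = max (a(N) ∩ a(M))`. -/
def meetDef (κ lam : Ordinal) (N M : ZFSet) : Prop :=
  memAt (alphaMax κ lam N M) N M

/-- The meet `N ∧ M`. -/
noncomputable def meetModel (κ lam : Ordinal) (N M : ZFSet) : ZFSet :=
  let pre := N.sep fun x => clps N x ∈ M
  let η := sSup {γ | γ ∈ Eset lam ∧ γ ≤ alphaMax κ lam N M ∧ γ < ordSup pre}
  proj η pre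

/-- `S` is an α-chain. -/
def ChainAt (α : Ordinal) (S : Set ZFSet) : Prop :=
  ∀ M ∈ S, ∀ N ∈ S, M ≠ N →
    memAt α M N ∨ memAt α N M ∨
      ∃ P ∈ S, (memAt α M P ∧ memAt α P N) ∨ (memAt α N P ∧ memAt α P M)

/-- Magidor's characterization of supercompactness. -/
def MagidorSupercompact (κ : Ordinal) : Prop :=
  ∀ γ > κ, ∀ x ∈ Vzf γ, ∃ κbar γbar : Ordinal, κbar < γbar ∧ γbar < κ ∧
    ∃ j : ZFSet → ZFSet, ElemEmbed (Vzf γbar) (Vzf γ) j ∧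
      (∀ y ∈ Vzf κbar, j y = y) ∧
      (∃ k, k ∈ Vzf γbar ∧ IsOrd k ∧ k.rank = κbar ∧ IsOrd (j k) ∧ (j k).rank = κ) ∧
      ∃ y ∈ Vzf γbar, j y = x

/-- First component of a Kuratowski pair. -/
noncomputable def fstZ (p : ZFSet) : ZFSet := ZFSet.sUnion (ZFSet.sInter p)

/-- Second component of a Kuratowski pair. -/
noncomputable def sndZ (p : ZFSet) : ZFSet :=
  if ((ZFSet.sUnion p).sep fun x => x ∉ ZFSet.sInter p) = ∅ then fstZ p
  else ZFSet.sUnion ((ZFSet.sUnion p).sep fun x => x ∉ ZFSet.sInter p)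

/-- The set of models of a (coded) condition `p = (ℳ_p, d_p)`. -/
noncomputable def modsZ (p : ZFSet) : ZFSet := fstZ p

/-- The decoration of a (coded) condition. -/
noncomputable def decZ (p : ZFSet) : ZFSet := sndZ p

/-- `𝓛(ℳ)` : all projections of models of `ℳ` to levels where they are active. -/
def Lset (κ lam : Ordinal) (m : ZFSet) : Set ZFSet :=
  {Q | ∃ M, M ∈ m ∧ ∃ a ∈ aSet κ lam M, Q = proj a M}

/-- `M` is an `ℳ`-free node. -/
def FreeIn (κ lam : Ordinal) (m M : ZFSet) : Prop :=
  M ∈ Lset κ lam m ∧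
    ∀ N, N ∈ m → memAt (levelOf κ lam M) M N → stronglyActiveAt κ lam (levelOf κ lam M) N

/-- `m ∈ 𝕄^κ_α` : a finite meet-closed set of countable and Magidor virtual models
whose projections form δ-chains at every level `δ ∈ E ∩ (α+1)`. -/
def IsMset (κ lam α : Ordinal) (m : ZFSet) : Prop :=
  m.toSet.Finite ∧
    (∀ M, M ∈ m → IsVirtual κ lam M ∧ (CountableZ M ∨ IsMagidor κ M) ∧
      levelOf κ lam M ≤ α) ∧
    (∀ N M, N ∈ m → M ∈ m → IsMagidor κ N → CountableZ M → meetDef κ lam N M →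
      meetModel κ lam N M ∈ m) ∧
    ∀ δ ∈ Eset lam, δ ≤ α →
      ChainAt δ {Q | ∃ M, M ∈ m ∧ activeAt κ lam δ M ∧ Q = proj δ M}

/-- `p` codes a condition of `ℙ^κ_α`. -/
def IsCondZ (κ lam α : Ordinal) (p : ZFSet) : Prop :=
  IsMset κ lam α (modsZ p) ∧
    (∀ q ∈ decZ p, ∃ M e, q = ZFSet.pair M e) ∧
    (∀ M e e', ZFSet.pair M e ∈ decZ p → ZFSet.pair M e' ∈ decZ p → e = e') ∧
    ∀ M e, ZFSet.pair M e ∈ decZ p →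
      FreeIn κ lam (modsZ p) M ∧ e.toSet.Finite ∧ e ⊆ Vzf κ ∧
        ∀ N, N ∈ modsZ p → memAt (levelOf κ lam M) M N → e ∈ N

/-- The ordering of `ℙ^κ_λ` : `q ≤ p`. -/
def leC (κ lam : Ordinal) (q p : ZFSet) : Prop :=
  (∀ M, M ∈ modsZ p → ∃ N, N ∈ modsZ q ∧ proj (levelOf κ lam M) N = M) ∧
    ∀ M e, ZFSet.pair M e ∈ decZ p →
      ∃ γ ∈ Eset lam, γ ≤ levelOf κ lam M ∧
        ∃ e', ZFSet.pair (proj γ M) e' ∈ decZ q ∧ e ⊆ e'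

/-- `p ↾ M` for a Magidor model `M`. -/
noncomputable def restrictMag (κ lam : Ordinal) (p M : ZFSet) : ZFSet :=
  ZFSet.pair
    (img (fun N => proj (alphaMax κ lam N M) N)
      ((modsZ p).sep fun N => kappaOf κ N < kappaOf κ M))
    ((decZ p).sep fun q => ∃ N e, q = ZFSet.pair N e ∧ N ∈ M)

/-- The unique copy inside a countable model `M` of a model `N` (via the `α(N,M)`-isomorphism). -/
noncomputable def copyIn (κ lam : Ordinal) (M N : ZFSet) : ZFSet :=
  ZFSet.sUnion (M.sep fun N' => IsoAt (alphaMax κ lam N M) N N')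

/-- `p ↾ M` for a countable model `M`. -/
noncomputable def restrictCtble (κ lam : Ordinal) (p M : ZFSet) : ZFSet :=
  ZFSet.pair
    (M.sep fun N' => ∃ N, N ∈ modsZ p ∧ IsoAt (alphaMax κ lam N M) N N')
    (img (fun q => ZFSet.pair (copyIn κ lam M (fstZ q)) (sndZ q))
      ((decZ p).sep fun q =>
        ∃ N e, q = ZFSet.pair N e ∧ memAt (levelOf κ lam N) N M))

/-- `G` is a `V`-generic filter on `ℙ^κ_λ`. -/
def GenericOn (κ lam : Ordinal) (G : Set ZFSet) : Prop :=
  (∀ p ∈ G, IsCondZ κ lam lam p) ∧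
    (∀ p ∈ G, ∀ q, IsCondZ κ lam lam q → leC κ lam p q → q ∈ G) ∧
    (∀ p ∈ G, ∀ q ∈ G, ∃ r ∈ G, leC κ lam r p ∧ leC κ lam r q) ∧
    ∀ D : Set ZFSet,
      (∀ p, IsCondZ κ lam lam p → ∃ q ∈ D, IsCondZ κ lam lam q ∧ leC κ lam q p) →
      ∃ q ∈ G, q ∈ D

/-- The models appearing in a filter `G`. -/
def MGmods (G : Set ZFSet) : Set ZFSet := {M | ∃ p ∈ G, M ∈ modsZ p}

/-- The generic α-chain `ℳ_G^α`. -/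
def MGchain (κ lam α : Ordinal) (G : Set ZFSet) : Set ZFSet :=
  {Q | ∃ M ∈ MGmods G, activeAt κ lam α M ∧ Q = proj α M}

/-- `C_α(G) = {κ_M : M ∈ ℳ_G^α}`. -/
def Cclub (κ lam α : Ordinal) (G : Set ZFSet) : Set Ordinal :=
  {o | ∃ Q ∈ MGchain κ lam α G, kappaOf κ Q = o}

/-- `f` is (a set of ordinal pairs coding) a surjection from `a` onto `b`. -/
def SurjOnto (f : ZFSet) (a b : Ordinal) : Prop :=
  (∀ q ∈ f, ∃ x y, q = ZFSet.pair x y ∧ IsOrd x ∧ x.rank < a) ∧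
    ∀ y, IsOrd y → y.rank < b → ∃ x, ZFSet.pair x y ∈ f

/-- A subset of `Set Ordinal` is club in `δ`. -/
def IsClubIn (C : Set Ordinal) (δ : Ordinal) : Prop :=
  (∀ β < δ, ∃ γ ∈ C, β < γ ∧ γ < δ) ∧
    ∀ γ < δ, 0 < γ → (∀ β < γ, ∃ γ' ∈ C, β < γ' ∧ γ' < γ) → γ ∈ C

/-- A suitable structure: a transitive set satisfying a sufficient fragment of ZFC
(rendered here by closure under the basic set operations). -/
def Suitable (A : ZFSet) : Prop :=
  A.IsTransitive ∧ (∅ : ZFSet) ∈ A ∧ (∀ x ∈ A, ∀ y ∈ A, ({x, y} : ZFSet) ∈ A) ∧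
    ∀ x ∈ A, ZFSet.sUnion x ∈ A

/-- `E_A = {α ∈ A : A ∩ V_α ≺ A}`. -/
def EA (A : ZFSet) : Set ZFSet :=
  {a | a ∈ A ∧ IsOrd a ∧ ElemSub (A ∩ Vzf a.rank) A}

/-- `R` codes a preorder on `P`. -/
def PreordZ (P R : ZFSet) : Prop :=
  (∀ q ∈ R, ∃ x y, q = ZFSet.pair x y ∧ x ∈ P ∧ y ∈ P) ∧
    (∀ p ∈ P, ZFSet.pair p p ∈ R) ∧
    ∀ p q r, ZFSet.pair p q ∈ R → ZFSet.pair q r ∈ R → ZFSet.pair p r ∈ R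

/-- `p` is an `(A, P)`-strongly generic condition. -/
def SGenZ (P R A p : ZFSet) : Prop :=
  p ∈ P ∧ ∀ q, q ∈ P → ZFSet.pair q p ∈ R →
    ∃ q', q' ∈ A ∧ q' ∈ P ∧
      ∀ r, r ∈ A → r ∈ P → ZFSet.pair r q' ∈ R →
        ∃ s, s ∈ P ∧ ZFSet.pair s r ∈ R ∧ ZFSet.pair s q ∈ R

/-- `G` is a `W`-generic filter on the forcing `(P, R)`. -/
def GenericFilterOn (W : Set ZFSet) (P R : ZFSet) (G : Set ZFSet) : Prop :=
  (∀ p ∈ G, p ∈ P) ∧ (∀ p ∈ G, ∀ q, q ∈ P → ZFSet.pair p q ∈ R → q ∈ G) ∧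
    (∀ p ∈ G, ∀ q ∈ G, ∃ r ∈ G, ZFSet.pair r p ∈ R ∧ ZFSet.pair r q ∈ R) ∧
    ∀ D, D ∈ W → D ⊆ P → (∀ p, p ∈ P → ∃ q, q ∈ D ∧ ZFSet.pair q p ∈ R) →
      ∃ q ∈ G, q ∈ D

/-- `A ∩ κ ∈ κ` : the ordinals of `A` below `κ` form an ordinal `< κ`. -/
def OrdSeg (A : ZFSet) (κo : Ordinal) : Prop :=
  ∃ δ < κo, ∀ x, IsOrd x → ((x ∈ A ∧ x.rank < κo) ↔ x.rank < δ)

/-- `S` is stationary in `𝒫_κ(X)`. -/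
def StatPk (κo : Ordinal) (X : ZFSet) (S : Set ZFSet) : Prop :=
  ∀ F : ZFSet, IsZFn F →
    (∀ s y, ZFSet.pair s y ∈ F → s ⊆ X ∧ s.toSet.Finite ∧ y ∈ X) →
    ∃ A ∈ S, A ⊆ X ∧ OrdSeg A κo ∧
      ∀ s, s ⊆ A → s.toSet.Finite → ∀ y, ZFSet.pair s y ∈ F → y ∈ A

/-- `M` is a `γ`-guessing model. -/
def IsGuessing (γ : Cardinal.{0}) (M : ZFSet) : Prop :=
  ∀ x : ZFSet, x ⊆ M → (∃ y, y ∈ M ∧ x ⊆ y) →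
    (∀ a, a ∈ M → a ⊆ M → zcard a < Cardinal.lift.{1,0} γ → (a ∩ x) ∈ M) →
    ∃ g, g ∈ M ∧ x = g ∩ M

/-- The transitive closure of a `ZFSet`, as a class. -/
def tcClass (x : ZFSet) : Set ZFSet := {y | ∃ n : ℕ, y ∈ (ZFSet.sUnion)^[n] x}

/-- `x ∈ H_θ`. -/
def InH (θ : Cardinal.{0}) (x : ZFSet) : Prop :=
  Cardinal.mk (tcClass x) < Cardinal.lift.{1,0} θ

/-- `M ∩ λ` is precisely the ordinal `o` (as a set of ordinals below `λ`). -/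
def TraceIsOrdinal (M : ZFSet) (lamo o : Ordinal) : Prop :=
  o ≤ lamo ∧ ∀ r < lamo, ((∃ x, x ∈ M ∧ IsOrd x ∧ x.rank = r) ↔ r < o)

/-- The principle `FS(κ⁺, γ)`. -/
def FSprin (κ γ : Cardinal.{0}) : Prop :=
  ∀ X : ZFSet, InH (Order.succ κ) X →
    ∃ 𝒢 : Set ZFSet,
      (∀ M ∈ 𝒢, IsGuessing γ M ∧ zcard M = Cardinal.lift.{1,0} κ ∧ X ∈ M) ∧
      (∀ β < (Order.succ κ).ord, ∃ o, β < o ∧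
        ∃ M ∈ 𝒢, TraceIsOrdinal M (Order.succ κ).ord o) ∧
      ∀ o < (Order.succ κ).ord, o.cof = κ →
        (∀ β < o, ∃ o', β < o' ∧ o' < o ∧
          ∃ M ∈ 𝒢, TraceIsOrdinal M (Order.succ κ).ord o') →
        ∃ M ∈ 𝒢, TraceIsOrdinal M (Order.succ κ).ord o

/-- `ā` is a `λ`-approaching sequence (of bounded subsets of `λ`). -/
def ApproachSeq (lamo : Ordinal) (a : Ordinal → Set Ordinal) : Prop :=
  ∀ ξ < lamo, ∃ β < lamo, a ξ ⊆ Set.Iio β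

/-- `otp(c) < δ`. -/
def otpLT (c : Set Ordinal.{0}) (δ : Ordinal.{0}) : Prop :=
  Ordinal.type (Subrel ((· < ·) : Ordinal → Ordinal → Prop) (· ∈ c)) < Ordinal.lift.{1,0} δ

/-- The set `B(ā)` of approachable points. -/
def Bset (lamo : Ordinal) (a : Ordinal → Set Ordinal) : Set Ordinal :=
  {δ | δ < lamo ∧ ∃ c : Set Ordinal, c ⊆ Set.Iio δ ∧ (∀ β < δ, ∃ γ ∈ c, β < γ) ∧
    otpLT c δ ∧ ∀ γ < δ, ∃ η < δ, c ∩ Set.Iio γ = a η}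

/-- `S` is nonstationary in `λ`. -/
def NonStatIn (lamo : Ordinal) (S : Set Ordinal) : Prop :=
  ∃ C, IsClubIn C lamo ∧ ∀ x ∈ S, x ∉ C

/-- `S` belongs to the approachability ideal `I[λ]`. -/
def InApproachIdeal (lamo : Ordinal) (S : Set Ordinal) : Prop :=
  ∃ (k : ℕ) (f : ℕ → Ordinal → Set Ordinal), (∀ i < k, ApproachSeq lamo (f i)) ∧
    ∃ N, NonStatIn lamo N ∧ ∀ x ∈ S, x ∈ N ∨ ∃ i < k, x ∈ Bset lamo (f i)



section Stmt6Aux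

theorem mem_img {f : ZFSet → ZFSet} {x y : ZFSet} : y ∈ img f x ↔ ∃ z ∈ x, f z = y :=
  @ZFSet.mem_image f (Classical.allZFSetDefinable _) x y

theorem img_mk (f : ZFSet → ZFSet) {x y : ZFSet} (h : y ∈ x) : f y ∈ img f x :=
  mem_img.2 ⟨y, h, rfl⟩

theorem mem_Vzf {o : Ordinal.{0}} {y : ZFSet} : y ∈ Vzf o ↔ y.rank < o := by
  induction o using Ordinal.induction generalizing y with
  | h o IH =>
    rw [Vzf]
    simp only [ZFSet.mem_sUnion, ZFSet.mem_range, Set.mem_range]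
    constructor
    · rintro ⟨z, ⟨i, rfl⟩, hz⟩
      have hb := Ordinal.typein_lt_self i
      rw [ZFSet.mem_powerset] at hz
      have : y.rank ≤ @Ordinal.typein o.ToType (· < ·) isWellOrder_lt i := by
        rw [ZFSet.rank_le_iff]
        intro w hw
        exact (IH _ hb).1 (hz hw)
      exact lt_of_le_of_lt this hb
    · intro h
      have h' : y.rank < @Ordinal.type o.ToType (· < ·) isWellOrder_lt := by
        rwa [Ordinal.type_toType o]
      obtain ⟨i, hi⟩ := @Ordinal.typein_surj o.ToType (· < ·) isWellOrder_lt _ h'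
      refine ⟨_, ⟨i, rfl⟩, ZFSet.mem_powerset.2 fun w hw => ?_⟩
      refine (IH _ (Ordinal.typein_lt_self i)).2 ?_
      rw [hi]
      exact ZFSet.rank_lt_of_mem hw

theorem Vzf_mem_trans {o : Ordinal.{0}} {y w : ZFSet} (hy : y ∈ Vzf o) (hw : w ∈ y) :
    w ∈ Vzf o :=
  mem_Vzf.2 (lt_trans (ZFSet.rank_lt_of_mem hw) (mem_Vzf.1 hy))

noncomputable def vnOrd (o : Ordinal.{0}) : ZFSet.{0} :=
  ZFSet.range fun i : o.ToType => vnOrd (@Ordinal.typein o.ToType (· < ·) isWellOrder_lt i)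
termination_by o
decreasing_by exact Ordinal.typein_lt_self i

theorem mem_vnOrd {o : Ordinal.{0}} {y : ZFSet} : y ∈ vnOrd o ↔ ∃ o' < o, y = vnOrd o' := by
  rw [vnOrd]
  simp only [ZFSet.mem_range, Set.mem_range]
  constructor
  · rintro ⟨i, rfl⟩
    exact ⟨_, Ordinal.typein_lt_self i, rfl⟩
  · rintro ⟨o', ho', rfl⟩
    have h' : o' < @Ordinal.type o.ToType (· < ·) isWellOrder_lt := by
      rwa [Ordinal.type_toType o]
    obtain ⟨i, hi⟩ := @Ordinal.typein_surj o.ToType (· < ·) isWellOrder_lt _ h'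
    exact ⟨i, by rw [hi]⟩

theorem rank_vnOrd (o : Ordinal.{0}) : (vnOrd o).rank = o := by
  induction o using Ordinal.induction with
  | h o IH =>
    apply le_antisymm
    · rw [ZFSet.rank_le_iff]
      intro y hy
      obtain ⟨o', ho', rfl⟩ := mem_vnOrd.1 hy
      rw [IH _ ho']; exact ho'
    · by_contra hlt
      push_neg at hlt
      have h1 : vnOrd (vnOrd o).rank ∈ vnOrd o := mem_vnOrd.2 ⟨_, hlt, rfl⟩
      have h2 := ZFSet.rank_lt_of_mem h1
      rw [IH _ hlt] at h2
      exact lt_irrefl _ h2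

theorem vnOrd_mem_vnOrd {o' o : Ordinal.{0}} : vnOrd o' ∈ vnOrd o ↔ o' < o := by
  constructor
  · intro h
    have := ZFSet.rank_lt_of_mem h
    rwa [rank_vnOrd, rank_vnOrd] at this
  · intro h; exact mem_vnOrd.2 ⟨o', h, rfl⟩

theorem vnOrd_transitive (o : Ordinal.{0}) : ZFSet.IsTransitive (vnOrd o) := by
  intro y hy
  obtain ⟨o', ho', rfl⟩ := mem_vnOrd.1 hy
  intro w hw
  obtain ⟨o'', ho'', rfl⟩ := mem_vnOrd.1 hw
  exact mem_vnOrd.2 ⟨o'', lt_trans ho'' ho', rfl⟩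

theorem isOrd_vnOrd (o : Ordinal.{0}) : IsOrd (vnOrd o) := by
  refine ⟨vnOrd_transitive o, fun y hy => ?_⟩
  obtain ⟨o', _, rfl⟩ := mem_vnOrd.1 hy
  exact vnOrd_transitive o'

theorem isOrd_of_mem {x y : ZFSet} (hx : IsOrd x) (hy : y ∈ x) : IsOrd y :=
  ⟨hx.2 y hy, fun z hz => hx.2 z (hx.1 y hy hz)⟩

theorem isOrd_eq_vnOrd' : ∀ (o : Ordinal.{0}) (x : ZFSet.{0}), IsOrd x → x.rank = o →
    x = vnOrd x.rank := by
  intro o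
  induction o using Ordinal.induction with
  | h o IH0 =>
    intro x hx hxo
    have IH : ∀ y : ZFSet, y.rank < x.rank → IsOrd y → y = vnOrd y.rank := by
      intro y h1 h2
      exact IH0 y.rank (hxo ▸ h1) y h2 rfl
    apply ZFSet.ext
    intro y
    constructor
    · intro hy
      have h1 := IH _ (ZFSet.rank_lt_of_mem hy) (isOrd_of_mem hx hy)
      rw [h1]
      exact vnOrd_mem_vnOrd.2 (ZFSet.rank_lt_of_mem hy)
    · intro hy
      obtain ⟨o', ho', rfl⟩ := mem_vnOrd.1 hy
      have : ¬ x.rank ≤ o' := not_le.2 ho'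
      rw [ZFSet.rank_le_iff] at this
      push_neg at this
      obtain ⟨w, hw, hwr⟩ := this
      have hweq := IH _ (ZFSet.rank_lt_of_mem hw) (isOrd_of_mem hx hw)
      rcases eq_or_lt_of_le hwr with h | h
      · rw [h, ← hweq]; exact hw
      · have : vnOrd o' ∈ w := by rw [hweq]; exact vnOrd_mem_vnOrd.2 h
        exact hx.1 w hw this

theorem isOrd_eq_vnOrd {x : ZFSet.{0}} (hx : IsOrd x) : x = vnOrd x.rank :=
  isOrd_eq_vnOrd' x.rank x hx rfl

theorem isOrd_mem_of_rank_lt {x y : ZFSet.{0}} (hx : IsOrd x) (hy : IsOrd y)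
    (h : x.rank < y.rank) : x ∈ y := by
  have h2 := (vnOrd_mem_vnOrd (o' := x.rank) (o := y.rank)).2 h
  rwa [← isOrd_eq_vnOrd hx, ← isOrd_eq_vnOrd hy] at h2

def Fml.and (φ ψ : Fml) : Fml := .neg (.imp φ (.neg ψ))
def Fml.or' (φ ψ : Fml) : Fml := .imp (.neg φ) ψ
def Fml.iff' (φ ψ : Fml) : Fml := (φ.imp ψ).and (ψ.imp φ)
def Fml.ex (φ : Fml) : Fml := .neg (.all (.neg φ))

def vpush (x : ZFSet) (v : Nat → ZFSet) : Nat → ZFSet :=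
  fun n => match n with | 0 => x | n + 1 => v n

theorem Sat_all {A : ZFSet} {φ : Fml} {v : Nat → ZFSet} :
    Sat A (.all φ) v ↔ ∀ x ∈ A, Sat A φ (vpush x v) := Iff.rfl

theorem Sat_and {A : ZFSet} {φ ψ : Fml} {v : Nat → ZFSet} :
    Sat A (φ.and ψ) v ↔ (Sat A φ v ∧ Sat A ψ v) := by
  simp only [Fml.and, Sat]; tauto

theorem Sat_or {A : ZFSet} {φ ψ : Fml} {v : Nat → ZFSet} :
    Sat A (φ.or' ψ) v ↔ (Sat A φ v ∨ Sat A ψ v) := by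
  simp only [Fml.or', Sat]; tauto

theorem Sat_iff {A : ZFSet} {φ ψ : Fml} {v : Nat → ZFSet} :
    Sat A (φ.iff' ψ) v ↔ (Sat A φ v ↔ Sat A ψ v) := by
  simp only [Fml.iff', Fml.and, Sat]; tauto

theorem Sat_ex {A : ZFSet} {φ : Fml} {v : Nat → ZFSet} :
    Sat A (Fml.ex φ) v ↔ ∃ x ∈ A, Sat A φ (vpush x v) := by
  simp only [Fml.ex, Sat, Sat_all]
  constructor
  · intro h
    by_contra hc
    push_neg at hc
    exact h fun x hx hs => hc x hx hs
  · rintro ⟨x, hx, hs⟩ h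
    exact h x hx hs

theorem Sat_mem {A : ZFSet} {i j : Nat} {v : Nat → ZFSet} :
    Sat A (.mem i j) v ↔ v i ∈ v j := Iff.rfl
theorem Sat_eq {A : ZFSet} {i j : Nat} {v : Nat → ZFSet} :
    Sat A (.eq i j) v ↔ v i = v j := Iff.rfl
theorem Sat_imp {A : ZFSet} {φ ψ : Fml} {v : Nat → ZFSet} :
    Sat A (.imp φ ψ) v ↔ (Sat A φ v → Sat A ψ v) := Iff.rfl
theorem vpush_zero (x : ZFSet) (v : Nat → ZFSet) : vpush x v 0 = x := rfl
theorem vpush_succ (x : ZFSet) (v : Nat → ZFSet) (n : Nat) : vpush x v (n+1) = v n := rfl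


def fS (u a : Nat) : Fml := .all ((Fml.mem 0 (u+1)).iff' (.eq 0 (a+1)))
def fP2 (u a b : Nat) : Fml := .all ((Fml.mem 0 (u+1)).iff' ((Fml.eq 0 (a+1)).or' (.eq 0 (b+1))))
def fPair (p a b : Nat) : Fml := .all ((Fml.mem 0 (p+1)).iff' ((fS 0 (a+1)).or' (fP2 0 (a+1) (b+1))))
def fD (xi w f : Nat) : Fml := Fml.ex ((Fml.mem 0 (f+1)).and (fPair 0 (xi+1) (w+1)))
def fFunc (f : Nat) : Fml := .all (.all (.all (((fD 2 1 (f+3)).and (fD 2 0 (f+3))).imp (.eq 1 0))))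
def fCov (z rho f : Nat) : Fml :=
  .all ((Fml.mem 0 (z+1)).imp (Fml.ex ((Fml.mem 0 (rho+2)).and (fD 0 1 (f+2)))))
def fPhi (kv z : Nat) : Fml :=
  Fml.ex (Fml.ex ((Fml.mem 1 (kv+2)).and ((fFunc 0).and (fCov (z+2) 1 0))))
def fExD (xi f : Nat) : Fml := Fml.ex (fD (xi+1) 0 (f+1))

def pS (A u a : ZFSet) : Prop := ∀ t ∈ A, (t ∈ u ↔ t = a)
def pP2 (A u a b : ZFSet) : Prop := ∀ t ∈ A, (t ∈ u ↔ (t = a ∨ t = b))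
def pPair (A p a b : ZFSet) : Prop := ∀ t ∈ A, (t ∈ p ↔ (pS A t a ∨ pP2 A t a b))
def pD (A f a b : ZFSet) : Prop := ∃ q ∈ A, q ∈ f ∧ pPair A q a b
def pFunc (A f : ZFSet) : Prop :=
  ∀ ξ ∈ A, ∀ w ∈ A, ∀ w' ∈ A, pD A f ξ w → pD A f ξ w' → w = w'
def pCov (A z ρ f : ZFSet) : Prop := ∀ w ∈ A, w ∈ z → ∃ ξ ∈ A, ξ ∈ ρ ∧ pD A f ξ w
def pPhi (A kv z : ZFSet) : Prop :=
  ∃ ρ ∈ A, ∃ f ∈ A, ρ ∈ kv ∧ pFunc A f ∧ pCov A z ρ f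
def pExD (A f ξ : ZFSet) : Prop := ∃ w ∈ A, pD A f ξ w

theorem Sat_fS {A : ZFSet} {u a : Nat} {v : Nat → ZFSet} :
    Sat A (fS u a) v ↔ pS A (v u) (v a) := by
  simp only [fS, Sat_all, Sat_iff, Sat_mem, Sat_eq, vpush_zero, vpush_succ, pS]

theorem Sat_fP2 {A : ZFSet} {u a b : Nat} {v : Nat → ZFSet} :
    Sat A (fP2 u a b) v ↔ pP2 A (v u) (v a) (v b) := by
  simp only [fP2, Sat_all, Sat_iff, Sat_or, Sat_mem, Sat_eq, vpush_zero, vpush_succ, pP2]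

theorem Sat_fPair {A : ZFSet} {p a b : Nat} {v : Nat → ZFSet} :
    Sat A (fPair p a b) v ↔ pPair A (v p) (v a) (v b) := by
  simp only [fPair, Sat_all, Sat_iff, Sat_or, Sat_fS, Sat_fP2, Sat_mem, vpush_zero, vpush_succ, pPair, pS, pP2]

theorem Sat_fD {A : ZFSet} {xi w f : Nat} {v : Nat → ZFSet} :
    Sat A (fD xi w f) v ↔ pD A (v f) (v xi) (v w) := by
  simp only [fD, Sat_ex, Sat_and, Sat_fPair, Sat_mem, vpush_zero, vpush_succ, pD]

theorem Sat_fFunc {A : ZFSet} {f : Nat} {v : Nat → ZFSet} :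
    Sat A (fFunc f) v ↔ pFunc A (v f) := by
  simp only [fFunc, Sat_all, Sat_and, Sat_fD, Sat_imp, Sat_eq, vpush_zero, vpush_succ, pFunc]
  constructor
  · intro h ξ hξ w hw w' hw' h1 h2
    exact h ξ hξ w hw w' hw' ⟨h1, h2⟩
  · intro h ξ hξ w hw w' hw' hp
    exact h ξ hξ w hw w' hw' hp.1 hp.2

theorem Sat_fCov {A : ZFSet} {z rho f : Nat} {v : Nat → ZFSet} :
    Sat A (fCov z rho f) v ↔ pCov A (v z) (v rho) (v f) := by
  simp only [fCov, Sat_all, Sat_ex, Sat_and, Sat_fD, Sat_imp, Sat_mem, vpush_zero, vpush_succ, pCov]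

theorem Sat_fPhi {A : ZFSet} {kv z : Nat} {v : Nat → ZFSet} :
    Sat A (fPhi kv z) v ↔ pPhi A (v kv) (v z) := by
  simp only [fPhi, Sat_ex, Sat_and, Sat_fFunc, Sat_fCov, Sat_mem, vpush_zero, vpush_succ, pPhi]

theorem Sat_fExD {A : ZFSet} {xi f : Nat} {v : Nat → ZFSet} :
    Sat A (fExD xi f) v ↔ pExD A (v f) (v xi) := by
  simp only [fExD, Sat_ex, Sat_fD, vpush_zero, vpush_succ, pExD]


def fExt : Fml := (Fml.all ((Fml.mem 0 1).iff' (.mem 0 2))).imp (.eq 0 1)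

theorem Sat_fExt {A : ZFSet} {v : Nat → ZFSet} :
    Sat A fExt v ↔ ((∀ t ∈ A, (t ∈ v 0 ↔ t ∈ v 1)) → v 0 = v 1) := by
  simp only [fExt, Sat_imp, Sat_all, Sat_iff, Sat_mem, Sat_eq, vpush_zero, vpush_succ]

def fNe : Fml := Fml.ex (.mem 0 1)

theorem Sat_fNe {A : ZFSet} {v : Nat → ZFSet} :
    Sat A fNe v ↔ ∃ t ∈ A, t ∈ v 0 := by
  simp only [fNe, Sat_ex, Sat_mem, vpush_zero, vpush_succ]

theorem Sat_iso {A B : ZFSet.{0}} {σ : ZFSet → ZFSet}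
    (hmap : ∀ x ∈ A, σ x ∈ B) (hsurj : ∀ y ∈ B, ∃ x ∈ A, σ x = y)
    (hinj : ∀ x ∈ A, ∀ y ∈ A, σ x = σ y → x = y)
    (hmem : ∀ x ∈ A, ∀ y ∈ A, (x ∈ y ↔ σ x ∈ σ y)) :
    ∀ (φ : Fml) (v : Nat → ZFSet), (∀ n, v n ∈ A) →
      (Sat A φ v ↔ Sat B φ (fun n => σ (v n))) := by
  intro φ
  induction φ with
  | mem i j => intro v hv; exact hmem _ (hv i) _ (hv j)
  | eq i j =>
    intro v hv
    constructor
    · intro h; simp only [Sat]; rw [h]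
    · intro h; exact hinj _ (hv i) _ (hv j) h
  | imp φ ψ ih1 ih2 =>
    intro v hv
    simp only [Sat_imp]
    rw [ih1 v hv, ih2 v hv]
  | neg φ ih =>
    intro v hv
    simp only [Sat]
    rw [ih v hv]
  | all φ ih =>
    intro v hv
    simp only [Sat_all]
    constructor
    · intro h y hy
      obtain ⟨x, hx, rfl⟩ := hsurj y hy
      have h2 := (ih (vpush x v) (fun n => by cases n with
        | zero => exact hx
        | succ n => exact hv n)).1 (h x hx)
      have he : (fun n => σ (vpush x v n)) = vpush (σ x) (fun n => σ (v n)) := by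
        funext n; cases n <;> rfl
      rwa [he] at h2
    · intro h x hx
      have h2 := h (σ x) (hmap x hx)
      have he : (fun n => σ (vpush x v n)) = vpush (σ x) (fun n => σ (v n)) := by
        funext n; cases n <;> rfl
      rw [← he] at h2
      exact (ih (vpush x v) (fun n => by cases n with
        | zero => exact hx
        | succ n => exact hv n)).2 h2

theorem mem_clps {N x w : ZFSet} :
    w ∈ clps N x ↔ ∃ y, y ∈ x ∧ y ∈ N ∧ clps N y = w := by
  rw [clps]
  simp only [mem_img, ZFSet.mem_sep]
  constructor
  · rintro ⟨y, ⟨hyx, hyN⟩, hy⟩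
    rw [dif_pos (ZFSet.rank_lt_of_mem hyx)] at hy
    exact ⟨y, hyx, hyN, hy⟩
  · rintro ⟨y, hyx, hyN, hy⟩
    refine ⟨y, ⟨hyx, hyN⟩, ?_⟩
    rw [dif_pos (ZFSet.rank_lt_of_mem hyx)]
    exact hy

theorem clps_mem {N x y : ZFSet} (hyx : y ∈ x) (hyN : y ∈ N) :
    clps N y ∈ clps N x :=
  mem_clps.2 ⟨y, hyx, hyN, rfl⟩

theorem clps_fix {N : ZFSet.{0}} {o : Ordinal.{0}} (hsub : Vzf o ⊆ N) :
    ∀ x, x ∈ Vzf o → clps N x = x := by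
  have : ∀ (r : Ordinal.{0}) (x : ZFSet.{0}), x.rank ≤ r → x ∈ Vzf o → clps N x = x := by
    intro r
    induction r using Ordinal.induction with
    | h r IH =>
      intro x hxr hxV
      apply ZFSet.ext
      intro w
      rw [mem_clps]
      constructor
      · rintro ⟨y, hyx, _, rfl⟩
        have hyV : y ∈ Vzf o := Vzf_mem_trans hxV hyx
        rw [IH y.rank (lt_of_lt_of_le (ZFSet.rank_lt_of_mem hyx) hxr) y le_rfl hyV]
        exact hyx
      · intro hw
        have hwV : w ∈ Vzf o := Vzf_mem_trans hxV hw
        exact ⟨w, hw, hsub hwV,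
          IH w.rank (lt_of_lt_of_le (ZFSet.rank_lt_of_mem hw) hxr) w le_rfl hwV⟩
  exact fun x => this x.rank x le_rfl

section MSec
variable {M : ZFSet.{0}}
  (hext : ∀ a ∈ M, ∀ b ∈ M, (∀ t ∈ M, (t ∈ a ↔ t ∈ b)) → a = b)
include hext

theorem clps_inj : ∀ a ∈ M, ∀ b ∈ M, clps M a = clps M b → a = b := by
  have key : ∀ (o : Ordinal.{0}), ∀ a b : ZFSet.{0}, a ∈ M → b ∈ M →
      a.rank ⊔ b.rank ≤ o → clps M a = clps M b → a = b := by
    intro o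
    induction o using Ordinal.induction with
    | h o IH =>
      intro a b haM hbM hr hc
      refine hext a haM b hbM fun t htM => ?_
      constructor
      · intro hta
        have h1 : clps M t ∈ clps M b := hc ▸ clps_mem hta htM
        obtain ⟨y, hyb, hyM, hy⟩ := mem_clps.1 h1
        have hlt : y.rank ⊔ t.rank < o :=
          sup_lt_iff.2 ⟨lt_of_lt_of_le (ZFSet.rank_lt_of_mem hyb) (le_trans le_sup_right hr),
            lt_of_lt_of_le (ZFSet.rank_lt_of_mem hta) (le_trans le_sup_left hr)⟩
        have := IH _ hlt y t hyM htM le_rfl hy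
        rwa [← this]
      · intro htb
        have h1 : clps M t ∈ clps M a := by rw [hc]; exact clps_mem htb htM
        obtain ⟨y, hya, hyM, hy⟩ := mem_clps.1 h1
        have hlt : y.rank ⊔ t.rank < o :=
          sup_lt_iff.2 ⟨lt_of_lt_of_le (ZFSet.rank_lt_of_mem hya) (le_trans le_sup_left hr),
            lt_of_lt_of_le (ZFSet.rank_lt_of_mem htb) (le_trans le_sup_right hr)⟩
        have := IH _ hlt y t hyM htM le_rfl hy
        rwa [← this]
  exact fun a ha b hb => key (a.rank ⊔ b.rank) a b ha hb le_rfl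

theorem clps_mem_iff {a b : ZFSet} (haM : a ∈ M) (hbM : b ∈ M) :
    a ∈ b ↔ clps M a ∈ clps M b := by
  constructor
  · intro h; exact clps_mem h haM
  · intro h
    obtain ⟨y, hyb, hyM, hy⟩ := mem_clps.1 h
    rwa [clps_inj hext y hyM a haM hy] at hyb

end MSec


theorem rank_kpair_le (a b : ZFSet.{0}) :
    (ZFSet.pair a b).rank ≤ (a.rank ⊔ b.rank) + 2 := by
  have h1 : (ZFSet.pair a b) = ({{a}, {a, b}} : ZFSet) := rfl
  rw [h1, ZFSet.rank_pair, ZFSet.rank_singleton, ZFSet.rank_pair]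
  simp only [Order.succ_eq_add_one]
  have h2 : (2 : Ordinal.{0}) = 1 + 1 := by norm_num
  rw [h2, ← add_assoc]
  apply sup_le
  · exact add_le_add_left (add_le_add_left le_sup_left 1) 1
  · exact add_le_add_left (sup_le (add_le_add_left le_sup_left 1)
      (add_le_add_left le_sup_right 1)) 1

theorem add_nat_lt_limit {γ s : Ordinal.{0}} (h : Order.IsSuccLimit γ) (hs : s < γ) (n : ℕ) :
    s + n < γ := by
  induction n with
  | zero => simpa using hs
  | succ m ih =>
    have : s + (m + 1 : ℕ) = Order.succ (s + m) := by
      push_cast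
      rw [← add_assoc, Ordinal.add_one_eq_succ]
    rw [this]
    exact h.succ_lt ih

theorem pPair_pair {A a b : ZFSet.{0}} (htr : A.IsTransitive) (ha : a ∈ A) (hb : b ∈ A) :
    pPair A (ZFSet.pair a b) a b := by
  intro u hu
  constructor
  · intro hup
    rcases ZFSet.mem_pair.1 hup with rfl | rfl
    · left; intro s _; exact ZFSet.mem_singleton
    · right; intro s _; exact ZFSet.mem_pair
  · rintro (hS | hP)
    · have hu1 : u = {a} := by
        apply ZFSet.ext
        intro s
        constructor
        · intro hsu
          rw [ZFSet.mem_singleton]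
          exact (hS s (htr u hu hsu)).1 hsu
        · intro hsu
          rw [ZFSet.mem_singleton] at hsu
          subst hsu
          exact (hS s ha).2 rfl
      rw [hu1]
      exact ZFSet.mem_pair.2 (Or.inl rfl)
    · have hu1 : u = ({a, b} : ZFSet) := by
        apply ZFSet.ext
        intro s
        constructor
        · intro hsu
          rw [ZFSet.mem_pair]
          exact (hP s (htr u hu hsu)).1 hsu
        · intro hsu
          rcases ZFSet.mem_pair.1 hsu with rfl | rfl
          · exact (hP s ha).2 (Or.inl rfl)
          · exact (hP s hb).2 (Or.inr rfl)
      rw [hu1]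
      exact ZFSet.mem_pair.2 (Or.inr rfl)

theorem pair_decode {A a₀ b₀ a b : ZFSet.{0}} (htr : A.IsTransitive)
    (hq : ZFSet.pair a₀ b₀ ∈ A) (ha : a ∈ A) (hb : b ∈ A) (hab : ({a, b} : ZFSet) ∈ A)
    (h : pPair A (ZFSet.pair a₀ b₀) a b) : a = a₀ ∧ b = b₀ := by
  have hqsub := htr _ hq
  have hsa₀ : ({a₀} : ZFSet) ∈ A := hqsub (ZFSet.mem_pair.2 (Or.inl rfl))
  have hpa₀ : ({a₀, b₀} : ZFSet) ∈ A := hqsub (ZFSet.mem_pair.2 (Or.inr rfl))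
  have ha₀ : a₀ ∈ A := htr _ hsa₀ (ZFSet.mem_singleton.2 rfl)
  have hb₀ : b₀ ∈ A := htr _ hpa₀ (ZFSet.mem_pair.2 (Or.inr rfl))
  -- a = a₀
  have haa : a = a₀ := by
    have h1 := (h _ hsa₀).1 (ZFSet.mem_pair.2 (Or.inl rfl))
    rcases h1 with hS | hP
    · have : a ∈ ({a₀} : ZFSet) := (hS a ha).2 rfl
      exact ZFSet.mem_singleton.1 this
    · have : a ∈ ({a₀} : ZFSet) := (hP a ha).2 (Or.inl rfl)
      exact ZFSet.mem_singleton.1 this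
  subst haa
  refine ⟨rfl, ?_⟩
  -- b ∈ {a, b₀}
  have hbin : b = a ∨ b = b₀ := by
    have hP2 : pP2 A ({a, b} : ZFSet) a b := fun s _ => ZFSet.mem_pair
    have h2 : ({a, b} : ZFSet) ∈ ZFSet.pair a b₀ := (h _ hab).2 (Or.inr hP2)
    rcases ZFSet.mem_pair.1 h2 with he | he
    · have : b ∈ ({a} : ZFSet) := by rw [← he]; exact ZFSet.mem_pair.2 (Or.inr rfl)
      exact Or.inl (ZFSet.mem_singleton.1 this)
    · have : b ∈ ({a, b₀} : ZFSet) := by rw [← he]; exact ZFSet.mem_pair.2 (Or.inr rfl)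
      exact ZFSet.mem_pair.1 this
  rcases hbin with rfl | rfl
  · -- b = a; show b₀ = a as well
    have h3 := (h _ hpa₀).1 (ZFSet.mem_pair.2 (Or.inr rfl))
    rcases h3 with hS | hP
    · exact ((hS b₀ hb₀).1 (ZFSet.mem_pair.2 (Or.inr rfl))).symm
    · have h4 := (hP b₀ hb₀).1 (ZFSet.mem_pair.2 (Or.inr rfl))
      rcases h4 with he | he
      · exact he.symm
      · exact he.symm
  · rfl

end Stmt6Aux

/-- a `κ`-Magidor model `M ≺ V_μ` is closed under sequences of length
`< κ_M = sup (M ∩ κ)` : every subset of `M` of size `< κ_M` that is an element of `V_μ`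
belongs to `M`. -/
theorem stmt6 (κ μ : Ordinal) (hsc : MagidorSupercompact κ) (M : ZFSet)
    (hME : ElemSub M (Vzf μ)) (hMag : IsMagidor κ M) :
    ∀ x : ZFSet, x ∈ Vzf μ → (∀ y, y ∈ x → y ∈ M) →
      zcard x < Cardinal.lift.{1,0} (kappaOf κ M).card → x ∈ M := by
  obtain ⟨hMsub, hMtr⟩ := hME
  obtain ⟨γ', hγκ, himg, k, hkM, hkOrd, hkrank, hcard, hVsub⟩ := hMag
  set κb : Ordinal := (clps M k).rank with hκb
  intro x hxVμ hxM hxcard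
  have hMV : ∀ a ∈ M, a ∈ Vzf μ := fun a ha => hMsub ha
  -- extensionality of M
  have hext : ∀ a ∈ M, ∀ b ∈ M, (∀ t ∈ M, (t ∈ a ↔ t ∈ b)) → a = b := by
    intro a ha b hb hiff
    set v : Nat → ZFSet := fun n => if n = 0 then a else if n = 1 then b else k with hv
    have hvM : ∀ n, v n ∈ M := by
      intro n
      simp only [hv]
      split_ifs <;> assumption
    have hVext : Sat (Vzf μ) fExt v := by
      rw [Sat_fExt]
      intro hpre
      apply ZFSet.ext
      intro s
      constructor
      · intro hs
        exact (hpre s (Vzf_mem_trans (hMV _ (hvM 0)) hs)).1 hs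
      · intro hs
        exact (hpre s (Vzf_mem_trans (hMV _ (hvM 1)) hs)).2 hs
    have hMext := (hMtr fExt v hvM).2 hVext
    rw [Sat_fExt] at hMext
    have : v 0 = v 1 := hMext (fun s hs => hiff s hs)
    simpa [hv] using this
  -- collapse basics
  have hπV : ∀ a ∈ M, clps M a ∈ Vzf γ' := by
    intro a ha
    rw [← himg]
    exact img_mk _ ha
  have hsurjV : ∀ u ∈ Vzf γ', ∃ z ∈ M, clps M z = u := by
    intro u hu
    rw [← himg] at hu
    exact mem_img.1 hu
  have hinj := clps_inj hext
  have hmemiff := fun {a b} => clps_mem_iff (M := M) hext (a := a) (b := b)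
  have hfix : ∀ w ∈ Vzf κb, clps M w = w := fun w hw => clps_fix hVsub w hw
  have hκbγ' : κb < γ' := mem_Vzf.1 (hπV k hkM)
  have hκκ : κb < κ := lt_trans hκbγ' hγκ
  -- ordinals of M below κ have rank < κb
  have hπko : ∀ o < κb, vnOrd o ∈ clps M k := by
    intro o ho
    have hvV : vnOrd o ∈ Vzf κb := mem_Vzf.2 (by rw [rank_vnOrd]; exact ho)
    have hvM : vnOrd o ∈ M := hVsub hvV
    have hvk : vnOrd o ∈ k := isOrd_mem_of_rank_lt (isOrd_vnOrd o) hkOrd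
      (by rw [rank_vnOrd, hkrank]; exact lt_trans ho hκκ)
    have := clps_mem hvk hvM
    rwa [hfix _ hvV] at this
  have hkey : ∀ δ ∈ M, IsOrd δ → δ.rank < κ → δ.rank < κb := by
    intro δ hδM hδOrd hδκ
    have hδk : δ ∈ k := isOrd_mem_of_rank_lt hδOrd hkOrd (by rw [hkrank]; exact hδκ)
    have h2 : (clps M δ).rank < κb := ZFSet.rank_lt_of_mem (clps_mem hδk hδM)
    by_contra hge
    push_neg at hge
    have hsub2 : ∀ o < κb, vnOrd o ∈ clps M δ := by
      intro o ho
      have hvV : vnOrd o ∈ Vzf κb := mem_Vzf.2 (by rw [rank_vnOrd]; exact ho)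
      have hvM : vnOrd o ∈ M := hVsub hvV
      have hvδ : vnOrd o ∈ δ := isOrd_mem_of_rank_lt (isOrd_vnOrd o) hδOrd
        (by rw [rank_vnOrd]; exact lt_of_lt_of_le ho hge)
      have := clps_mem hvδ hvM
      rwa [hfix _ hvV] at this
    have := ZFSet.rank_lt_of_mem (hsub2 _ h2)
    rw [rank_vnOrd] at this
    exact lt_irrefl _ this
  -- kappaOf ≤ κb
  have hsup : kappaOf κ M ≤ κb := by
    apply csSup_le'
    rintro o ⟨X, hXM, hXOrd, rfl, hXκ⟩
    exact le_of_lt (hkey X hXM hXOrd hXκ)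
  -- dispose of the empty case
  by_cases hxe : x = ∅
  · subst hxe
    have h0 : zcard (∅ : ZFSet) = 0 := by
      simp [zcard, Cardinal.mk_eq_zero_iff]
      ext w; simp only [Set.mem_empty_iff_false, iff_false]
      intro h
      have h' : w ∈ (∅ : ZFSet) := h
      simp at h'
    rw [h0] at hxcard
    have hk0 : kappaOf κ M ≠ 0 := by
      intro h
      rw [h] at hxcard
      simp at hxcard
    have hκb0 : 0 < κb := lt_of_lt_of_le (pos_iff_ne_zero.2 hk0) hsup
    exact hVsub (mem_Vzf.2 (by rw [ZFSet.rank_empty]; exact hκb0))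
  -- x is nonempty
  obtain ⟨a0, ha0⟩ : ∃ a, a ∈ x := by
    by_contra h
    push_neg at h
    exact hxe (ZFSet.eq_empty x |>.2 h)
  -- cardinal bookkeeping
  obtain ⟨c₀, hc₀⟩ := Cardinal.mem_range_lift_of_le (le_of_lt hxcard)
  have hc0κ : c₀ < (kappaOf κ M).card :=
    Cardinal.lift_lt.1 (by rw [hc₀]; exact hxcard)
  have hc0κb : c₀ < κb.card := lt_of_lt_of_le hc0κ (Ordinal.card_le_card hsup)
  have hc0cof : c₀ < Ordinal.cof γ' := lt_of_lt_of_le hc0κb hcard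
  set o : Ordinal.{0} := c₀.ord with ho
  have homem : o < κb := lt_of_lt_of_le (Cardinal.ord_lt_ord.2 hc0κb) (Cardinal.ord_card_le κb)
  -- γ' is a limit ordinal
  have hcof1 : 1 < Ordinal.cof γ' := by
    have h1 : (1 : Cardinal.{1}) ≤ zcard x :=
      Cardinal.one_le_iff_ne_zero.2 (Cardinal.mk_ne_zero_iff.2 ⟨⟨a0, ha0⟩⟩)
    have h2 : (1 : Cardinal.{0}) < (kappaOf κ M).card :=
      Cardinal.lift_lt.1 (by rw [Cardinal.lift_one]; exact lt_of_le_of_lt h1 hxcard)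
    exact lt_of_lt_of_le h2 (le_trans (Ordinal.card_le_card hsup) hcard)
  have hlim : Order.IsSuccLimit γ' := by
    rcases Ordinal.zero_or_succ_or_isSuccLimit γ' with h | ⟨a, ha⟩ | h
    · rw [h] at hcof1; simp [Ordinal.cof_zero] at hcof1
    · rw [← ha, Ordinal.cof_succ] at hcof1; exact absurd hcof1 (lt_irrefl 1)
    · exact h
  -- a surjection from o.ToType onto x
  have hmk : Cardinal.mk (ULift.{1,0} o.ToType) = Cardinal.mk x.toSet := by
    rw [Cardinal.mk_uLift, Cardinal.mk_toType, ho, Cardinal.card_ord]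
    exact hc₀
  have e := Classical.choice (Cardinal.eq.1 hmk)
  set G : o.ToType → ZFSet.{0} := fun i => (e (ULift.up i)).1 with hGdef
  have hG : ∀ i, G i ∈ x := fun i => (e (ULift.up i)).2
  have hGsurj : ∀ y ∈ x, ∃ i, G i = y := by
    intro y hy
    refine ⟨(e.symm ⟨y, hy⟩).down, ?_⟩
    have : ULift.up (e.symm ⟨y, hy⟩).down = e.symm ⟨y, hy⟩ := rfl
    rw [hGdef]
    simp only [this, Equiv.apply_symm_apply]
  -- the sup of the ranks of collapses of elements of x
  set δ₀ : Ordinal.{0} := ⨆ i : o.ToType, ((clps M (G i)).rank + 1) with hδ₀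
  have hδ₀γ : δ₀ < γ' := by
    apply Ordinal.iSup_lt_ord
    · rw [Cardinal.mk_toType, ho, Cardinal.card_ord]
      exact hc0cof
    · intro i
      have := mem_Vzf.1 (hπV (G i) (hxM _ (hG i)))
      rw [Ordinal.add_one_eq_succ]
      exact hlim.succ_lt this
  set t : ZFSet.{0} := img (clps M) x with ht
  have htV : t ∈ Vzf γ' := by
    refine mem_Vzf.2 (lt_of_le_of_lt ?_ hδ₀γ)
    rw [ZFSet.rank_le_iff]
    intro w hw
    obtain ⟨y, hyx, rfl⟩ := mem_img.1 hw
    obtain ⟨i, rfl⟩ := hGsurj y hyx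
    calc (clps M (G i)).rank < (clps M (G i)).rank + 1 := by
          rw [Ordinal.add_one_eq_succ]; exact Order.lt_succ _
      _ ≤ δ₀ := le_ciSup (Ordinal.bddAbove_range _) i
  -- transitivity of the Vzf's
  have hVtr : ∀ ν : Ordinal.{0}, (Vzf ν).IsTransitive := by
    intro ν y hy
    intro w hw
    exact Vzf_mem_trans hy hw
  -- the coding function
  set tpin : o.ToType → Ordinal.{0} :=
    fun i => @Ordinal.typein o.ToType (· < ·) isWellOrder_lt i with htpin
  have htpin_lt : ∀ i, tpin i < o := fun i => Ordinal.typein_lt_self i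
  have htpin_inj : ∀ i j, tpin i = tpin j → i = j := by
    intro i j h
    exact (@Ordinal.typein_inj o.ToType (· < ·) isWellOrder_lt i j).1 h
  have htpin_surj : ∀ o' < o, ∃ i, tpin i = o' := by
    intro o' ho'
    have h' : o' < @Ordinal.type o.ToType (· < ·) isWellOrder_lt := by
      rwa [Ordinal.type_toType o]
    exact @Ordinal.typein_surj o.ToType (· < ·) isWellOrder_lt _ h'
  set F' : ZFSet → ZFSet := fun ξ =>
    if h : ∃ i : o.ToType, vnOrd (tpin i) = ξ then clps M (G h.choose) else ∅ with hF'def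
  have hF' : ∀ i : o.ToType, F' (vnOrd (tpin i)) = clps M (G i) := by
    intro i
    have hex : ∃ j, vnOrd (tpin j) = vnOrd (tpin i) := ⟨i, rfl⟩
    rw [hF'def]
    dsimp only
    rw [dif_pos hex]
    have hspec := hex.choose_spec
    have h2 : tpin hex.choose = tpin i := by
      have := congrArg ZFSet.rank hspec
      rwa [rank_vnOrd, rank_vnOrd] at this
    rw [htpin_inj _ _ h2]
  set ρ : ZFSet := vnOrd o with hρdef
  set g : ZFSet := img (fun ξ => ZFSet.pair ξ (F' ξ)) ρ with hgdef
  have hgmem : ∀ p ∈ g, ∃ i : o.ToType, p = ZFSet.pair (vnOrd (tpin i)) (clps M (G i)) := by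
    intro p hp
    obtain ⟨ξ, hξ, rfl⟩ := mem_img.1 hp
    obtain ⟨o', ho', rfl⟩ := mem_vnOrd.1 hξ
    obtain ⟨i, rfl⟩ := htpin_surj o' ho'
    exact ⟨i, by rw [hF']⟩
  have hgpair : ∀ i : o.ToType, ZFSet.pair (vnOrd (tpin i)) (clps M (G i)) ∈ g := by
    intro i
    have h1 : vnOrd (tpin i) ∈ ρ := vnOrd_mem_vnOrd.2 (htpin_lt i)
    have h2 := img_mk (fun ξ => ZFSet.pair ξ (F' ξ)) h1
    rwa [hF'] at h2
  have hρV : ρ ∈ Vzf γ' := mem_Vzf.2 (by rw [hρdef, rank_vnOrd]; exact lt_trans homem hκbγ')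
  have hξV : ∀ i : o.ToType, vnOrd (tpin i) ∈ Vzf γ' := by
    intro i
    refine mem_Vzf.2 ?_
    rw [rank_vnOrd]
    exact lt_trans (lt_trans (htpin_lt i) homem) hκbγ'
  have hwrank : ∀ i : o.ToType, (clps M (G i)).rank < δ₀ := by
    intro i
    calc (clps M (G i)).rank < (clps M (G i)).rank + 1 := by
          rw [Ordinal.add_one_eq_succ]; exact Order.lt_succ _
      _ ≤ δ₀ := le_ciSup (Ordinal.bddAbove_range _) i
  have hpairV : ∀ i : o.ToType, ZFSet.pair (vnOrd (tpin i)) (clps M (G i)) ∈ Vzf γ' := by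
    intro i
    refine mem_Vzf.2 (lt_of_le_of_lt (rank_kpair_le _ _) ?_)
    have hs : (vnOrd (tpin i)).rank ⊔ (clps M (G i)).rank < γ' := by
      apply sup_lt_iff.2
      constructor
      · exact mem_Vzf.1 (hξV i)
      · exact lt_trans (hwrank i) hδ₀γ
    have := add_nat_lt_limit hlim hs 2
    simpa using this
  have hgV : g ∈ Vzf γ' := by
    have hb1 : g.rank ≤ ((κb ⊔ δ₀) + 2) + 1 := by
      rw [ZFSet.rank_le_iff]
      intro p hp
      obtain ⟨i, rfl⟩ := hgmem p hp
      calc ZFSet.rank _ ≤ ((vnOrd (tpin i)).rank ⊔ (clps M (G i)).rank) + 2 := rank_kpair_le _ _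
        _ < ((κb ⊔ δ₀) + 2) + 1 := by
            rw [Ordinal.add_one_eq_succ]
            refine Order.lt_succ_of_le (add_le_add_left (sup_le_sup ?_ ?_) 2)
            · rw [rank_vnOrd]; exact le_of_lt (lt_trans (htpin_lt i) homem)
            · exact le_of_lt (hwrank i)
    refine mem_Vzf.2 (lt_of_le_of_lt hb1 ?_)
    have hs : κb ⊔ δ₀ < γ' := sup_lt_iff.2 ⟨hκbγ', hδ₀γ⟩
    have h4 := add_nat_lt_limit hlim hs 3
    have h3 : ((κb ⊔ δ₀) + 2) + 1 = (κb ⊔ δ₀) + ((3 : ℕ) : Ordinal) := by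
      push_cast
      rw [add_assoc]
      norm_num
    rw [h3]
    exact h4
  -- the genuine witness satisfies Φ in Vzf γ'
  have hpPhi : pPhi (Vzf γ') (clps M k) t := by
    refine ⟨ρ, hρV, g, hgV, hπko o homem, ?_, ?_⟩
    · intro ξ hξ w hw w' hw' hD hD'
      obtain ⟨q, hqA, hqg, hqP⟩ := hD
      obtain ⟨q', hqA', hqg', hqP'⟩ := hD'
      obtain ⟨i, rfl⟩ := hgmem q hqg
      obtain ⟨j, rfl⟩ := hgmem q' hqg'
      have habi : ({ξ, w} : ZFSet) ∈ Vzf γ' := by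
        refine mem_Vzf.2 ?_
        rw [ZFSet.rank_pair]
        apply sup_lt_iff.2
        constructor
        · rw [Order.succ_eq_add_one]
          have := add_nat_lt_limit hlim (mem_Vzf.1 hξ) 1
          simpa using this
        · rw [Order.succ_eq_add_one]
          have := add_nat_lt_limit hlim (mem_Vzf.1 hw) 1
          simpa using this
      have habj : ({ξ, w'} : ZFSet) ∈ Vzf γ' := by
        refine mem_Vzf.2 ?_
        rw [ZFSet.rank_pair]
        apply sup_lt_iff.2
        constructor
        · rw [Order.succ_eq_add_one]
          have := add_nat_lt_limit hlim (mem_Vzf.1 hξ) 1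
          simpa using this
        · rw [Order.succ_eq_add_one]
          have := add_nat_lt_limit hlim (mem_Vzf.1 hw') 1
          simpa using this
      obtain ⟨he1, he2⟩ := pair_decode (hVtr γ') hqA hξ hw habi hqP
      obtain ⟨he1', he2'⟩ := pair_decode (hVtr γ') hqA' hξ hw' habj hqP'
      have hij : i = j := by
        apply htpin_inj
        have := he1.symm.trans he1'
        have h2 := congrArg ZFSet.rank this
        rwa [rank_vnOrd, rank_vnOrd] at h2
      rw [he2, he2', hij]
    · intro w hwA hwt
      obtain ⟨y, hyx, rfl⟩ := mem_img.1 hwt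
      obtain ⟨i, rfl⟩ := hGsurj y hyx
      refine ⟨vnOrd (tpin i), hξV i, ?_, ?_⟩
      · rw [hρdef]
        exact vnOrd_mem_vnOrd.2 (htpin_lt i)
      · exact ⟨_, hpairV i, hgpair i, pPair_pair (hVtr γ') (hξV i) hwA⟩
  -- the inverse collapse
  set σ : ZFSet → ZFSet := fun u =>
    if h : ∃ z, z ∈ M ∧ clps M z = u then h.choose else k with hσdef
  have hσM : ∀ u, σ u ∈ M := by
    intro u
    rw [hσdef]
    dsimp only
    by_cases h : ∃ z, z ∈ M ∧ clps M z = u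
    · rw [dif_pos h]; exact h.choose_spec.1
    · rw [dif_neg h]; exact hkM
  have hσπ : ∀ u ∈ Vzf γ', clps M (σ u) = u := by
    intro u hu
    obtain ⟨z0, hz0M, hz0⟩ := hsurjV u hu
    have h : ∃ z, z ∈ M ∧ clps M z = u := ⟨z0, hz0M, hz0⟩
    rw [hσdef]
    dsimp only
    rw [dif_pos h]
    exact h.choose_spec.2
  have hσinv : ∀ a ∈ M, σ (clps M a) = a := by
    intro a ha
    exact hinj _ (hσM _) _ ha (by rw [hσπ _ (hπV a ha)])
  have hiso := Sat_iso (A := Vzf γ') (B := M) (σ := σ)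
    (fun u _ => hσM u) (fun y hy => ⟨clps M y, hπV y hy, hσinv y hy⟩)
    (fun u hu u' hu' h => by rw [← hσπ u hu, ← hσπ u' hu', h])
    (fun u hu u' hu' => by
      constructor
      · intro h
        rw [← hσπ u hu, ← hσπ u' hu'] at h
        exact (hmemiff (hσM u) (hσM u')).2 h
      · intro h
        have h2 := (hmemiff (hσM u) (hσM u')).1 h
        rwa [hσπ u hu, hσπ u' hu'] at h2)
  set v1 : Nat → ZFSet := fun n => if n = 0 then clps M k else if n = 1 then t else clps M k
    with hv1
  have hv1A : ∀ n, v1 n ∈ Vzf γ' := by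
    intro n
    rw [hv1]
    dsimp only
    split_ifs
    · exact hπV k hkM
    · exact htV
    · exact hπV k hkM
  have hSatV : Sat (Vzf γ') (fPhi 0 1) v1 := by
    rw [Sat_fPhi]
    simp only [hv1]
    norm_num
    exact hpPhi
  have hSatM := (hiso (fPhi 0 1) v1 hv1A).1 hSatV
  have hPhiM : pPhi M k (σ t) := by
    have h2 := Sat_fPhi.1 hSatM
    simp only [hv1] at h2
    norm_num at h2
    rwa [hσinv k hkM] at h2
  set z : ZFSet := σ t with hzdef
  have hzM : z ∈ M := hσM t
  have hzt : clps M z = t := hσπ t htV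
  obtain ⟨δ, hδM, f, hfM, hδk, hFunc, hCov⟩ := hPhiM
  have hδOrd : IsOrd δ := isOrd_of_mem hkOrd hδk
  have hδκb : δ.rank < κb :=
    hkey δ hδM hδOrd (by rw [← hkrank]; exact ZFSet.rank_lt_of_mem hδk)
  set v2 : Nat → ZFSet := fun n => if n = 0 then f else if n = 1 then δ else z with hv2
  have hv2M : ∀ n, v2 n ∈ M := by
    intro n
    rw [hv2]
    dsimp only
    split_ifs <;> assumption
  have hFuncV : pFunc (Vzf μ) f := by
    have h1 : Sat M (fFunc 0) v2 := by
      rw [Sat_fFunc]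
      simpa [hv2] using hFunc
    have h2 := (hMtr (fFunc 0) v2 hv2M).1 h1
    have h3 := Sat_fFunc.1 h2
    simpa [hv2] using h3
  have hCovV : pCov (Vzf μ) z δ f := by
    have h1 : Sat M (fCov 2 1 0) v2 := by
      rw [Sat_fCov]
      simpa [hv2] using hCov
    have h2 := (hMtr _ v2 hv2M).1 h1
    have h3 := Sat_fCov.1 h2
    simpa [hv2] using h3
  have hzsub : ∀ w ∈ z, w ∈ M := by
    intro w hw
    have hwVμ : w ∈ Vzf μ := Vzf_mem_trans (hMV z hzM) hw
    obtain ⟨ξ, hξVμ, hξδ, hpD⟩ := hCovV w hwVμ hw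
    have hξOrd : IsOrd ξ := isOrd_of_mem hδOrd hξδ
    have hξκb : ξ.rank < κb := lt_trans (ZFSet.rank_lt_of_mem hξδ) hδκb
    have hξM : ξ ∈ M := hVsub (mem_Vzf.2 hξκb)
    set v3 : Nat → ZFSet := fun n => if n = 0 then f else ξ with hv3
    have hv3M : ∀ n, v3 n ∈ M := by
      intro n
      rw [hv3]
      dsimp only
      split_ifs <;> assumption
    have hExD : Sat (Vzf μ) (fExD 1 0) v3 := by
      rw [Sat_fExD]
      simp only [hv3]
      norm_num
      exact ⟨w, hwVμ, hpD⟩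
    have hExDM := (hMtr _ v3 hv3M).2 hExD
    have h4 := Sat_fExD.1 hExDM
    simp only [hv3] at h4
    norm_num at h4
    obtain ⟨w', hw'M, hpD'M⟩ := h4
    set v4 : Nat → ZFSet := fun n => if n = 0 then f else if n = 1 then ξ else w' with hv4
    have hv4M : ∀ n, v4 n ∈ M := by
      intro n
      rw [hv4]
      dsimp only
      split_ifs <;> assumption
    have hpd1 : Sat M (fD 1 2 0) v4 := by
      rw [Sat_fD]
      simpa [hv4] using hpD'M
    have hpd2 := (hMtr _ v4 hv4M).1 hpd1
    have hpDVμ' : pD (Vzf μ) f ξ w' := by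
      have h5 := Sat_fD.1 hpd2
      simpa [hv4] using h5
    have hw'Vμ : w' ∈ Vzf μ := hMV w' hw'M
    have hww' : w = w' := hFuncV ξ hξVμ w hwVμ w' hw'Vμ hpD hpDVμ'
    rw [hww']
    exact hw'M
  have hzx : z = x := by
    apply ZFSet.ext
    intro w
    constructor
    · intro hw
      have hwM := hzsub w hw
      have h1 : clps M w ∈ t := by rw [← hzt]; exact clps_mem hw hwM
      obtain ⟨y, hyx, hy⟩ := mem_img.1 h1
      rwa [hinj y (hxM y hyx) w hwM hy] at hyx
    · intro hw
      have h1 : clps M w ∈ t := img_mk _ hw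
      rw [← hzt] at h1
      obtain ⟨u, huz, huM, hu⟩ := mem_clps.1 h1
      rwa [hinj u huM w (hxM w hw) hu] at huz
  rw [← hzx]
  exact hzM


end GM
end
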